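/- Let F₂ = ⟨a, b⟩, let k, n ≥ 2, and let H = ker(F₂ → Z/(kn), a ↦ n, b ↦ 1). For t = 0, …, n−1, let w_t = b⁻ᵗ(aᵏbⁿ)ᵏbᵗ (the complete lift of w = aᵏbⁿ to H with respect to the representatives bᵗ). Then the subgroup K = ⟨w₀, w₁, …, w_{n−1}⟩ ≤ H is free of rank n, freely generated by w₀, …, w_{n−1}. -/

import Mathlib

namespace Stmt19Aux

variable (k n : ℕ)

abbrev St (k n : ℕ) := FreeGroup (Fin n) × ZMod (k * n) × ZMod k

def em (hn : 0 < n) (p : ZMod (k * n)) : FreeGroup (Fin n) :=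
  FreeGroup.of ⟨p.val % n, Nat.mod_lt _ hn⟩

def Ap (hn : 0 < n) : Equiv.Perm (St k n) where
  toFun s := (if s.2.1.val < n ∧ s.2.2 = 0 then em k n hn s.2.1 * s.1 else s.1,
    s.2.1 + (n : ZMod (k * n)), s.2.2 + 1)
  invFun s := (if (s.2.1 - (n : ZMod (k * n))).val < n ∧ s.2.2 - 1 = 0 then
      (em k n hn (s.2.1 - (n : ZMod (k * n))))⁻¹ * s.1 else s.1,
    s.2.1 - (n : ZMod (k * n)), s.2.2 - 1)
  left_inv := by
    rintro ⟨g, p, q⟩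
    simp only [add_sub_cancel_right]
    split_ifs with h
    · simp
    · rfl
  right_inv := by
    rintro ⟨g, p, q⟩
    simp only [sub_add_cancel]
    split_ifs with h
    · simp
    · rfl

def Bp : Equiv.Perm (St k n) where
  toFun s := (s.1, s.2.1 + 1, s.2.2)
  invFun s := (s.1, s.2.1 - 1, s.2.2)
  left_inv := by rintro ⟨g, p, q⟩; simp
  right_inv := by rintro ⟨g, p, q⟩; simp

lemma Ap_apply (hn : 0 < n) (g : FreeGroup (Fin n)) (p : ZMod (k * n)) (q : ZMod k) :
    Ap k n hn (g, p, q) =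
      (if p.val < n ∧ q = 0 then em k n hn p * g else g, p + (n : ZMod (k * n)), q + 1) := rfl

lemma Bp_apply (g : FreeGroup (Fin n)) (p : ZMod (k * n)) (q : ZMod k) :
    Bp k n (g, p, q) = (g, p + 1, q) := rfl

lemma Bp_pow (m : ℕ) (g : FreeGroup (Fin n)) (p : ZMod (k * n)) (q : ZMod k) :
    (Bp k n ^ m) (g, p, q) = (g, p + (m : ZMod (k * n)), q) := by
  induction m generalizing p with
  | zero => simp
  | succ m ih =>
    rw [pow_succ, Equiv.Perm.mul_apply, Bp_apply, ih]
    push_cast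
    ring_nf

lemma Ap_quiet (hn : 0 < n) (j : ℕ) (g : FreeGroup (Fin n)) (p : ZMod (k * n)) (m : ℕ)
    (hm : 0 < m) (hjm : m + j ≤ k) :
    (Ap k n hn ^ j) (g, p, (m : ZMod k)) =
      (g, p + ((j * n : ℕ) : ZMod (k * n)), ((m + j : ℕ) : ZMod k)) := by
  induction j generalizing p m with
  | zero => simp
  | succ j ih =>
    rw [pow_succ', Equiv.Perm.mul_apply, ih p m hm (by omega)]
    rw [Ap_apply]
    have hmne : ((m + j : ℕ) : ZMod k) ≠ 0 := by
      intro h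
      rw [ZMod.natCast_eq_zero_iff] at h
      have := Nat.eq_zero_of_dvd_of_lt h (by omega)
      omega
    rw [if_neg (by tauto)]
    refine Prod.ext rfl (Prod.ext ?_ ?_) <;> push_cast <;> ring

lemma Ap_run (hn : 0 < n) (hk : 2 ≤ k) (g : FreeGroup (Fin n)) (p : ZMod (k * n)) :
    (Ap k n hn ^ k) (g, p, (0 : ZMod k)) =
      (if p.val < n then em k n hn p * g else g, p, 0) := by
  have hk1 : k = (k - 1) + 1 := by omega
  rw [show (Ap k n hn ^ k) = (Ap k n hn ^ (k-1)) * Ap k n hn by rw [← pow_succ, ← hk1]]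
  rw [Equiv.Perm.mul_apply, Ap_apply]
  simp only [and_true, eq_self_iff_true]
  have h0 : (0 : ZMod k) + 1 = ((1 : ℕ) : ZMod k) := by push_cast; ring
  rw [if_congr (Iff.intro (fun h => h) (fun h => h)) rfl rfl, h0,
    Ap_quiet k n hn (k-1) _ _ 1 (by omega) (by omega)]
  have h2 : (1 + (k - 1) : ℕ) = k := by omega
  have h3 : ((k : ℕ) : ZMod k) = 0 := ZMod.natCast_self k
  have hkn : n + (k - 1) * n = k * n := by
    calc n + (k-1)*n = ((k-1)+1)*n := by ring
    _ = k*n := by rw [← hk1]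
  have h4 : (n : ZMod (k*n)) + (((k-1) * n : ℕ) : ZMod (k*n)) = 0 := by
    rw [← Nat.cast_add, hkn, ZMod.natCast_self]
  have e1 : p + (n : ZMod (k*n)) + (((k-1) * n : ℕ) : ZMod (k*n)) = p := by
    rw [add_assoc, h4, add_zero]
  have e2 : ((1 + (k-1) : ℕ) : ZMod k) = 0 := by rw [h2, h3]
  rw [e1, e2]

end Stmt19Aux

namespace Stmt19Aux2
open Stmt19Aux
variable (k n : ℕ)

lemma Dpow_quiet (hn : 0 < n) (hk : 2 ≤ k) (t i : ℕ) (ht : t < n) (hik : i ≤ k - 1)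
    (g : FreeGroup (Fin n)) :
    ((Ap k n hn ^ k * Bp k n ^ n) ^ i) (g, ((t : ℕ) : ZMod (k * n)), (0 : ZMod k)) =
      (g, ((t + i * n : ℕ) : ZMod (k * n)), 0) := by
  induction i with
  | zero => simp
  | succ i ih =>
    rw [pow_succ', Equiv.Perm.mul_apply, ih (by omega), Equiv.Perm.mul_apply,
      Bp_pow, Ap_run k n hn hk]
    have hc : ((t + i * n : ℕ) : ZMod (k*n)) + ((n : ℕ) : ZMod (k*n))
        = ((t + (i+1) * n : ℕ) : ZMod (k*n)) := by push_cast; ring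
    rw [hc]
    have hval : ((t + (i+1) * n : ℕ) : ZMod (k*n)).val = t + (i+1) * n := by
      apply ZMod.val_natCast_of_lt
      have h1 : (i + 1) * n ≤ (k - 1) * n := Nat.mul_le_mul_right n (by omega)
      have h2 : t + (i+1) * n < n + (k-1) * n := by omega
      have h3 : n + (k-1) * n = k * n := by
        calc n + (k-1)*n = ((k-1)+1)*n := by ring
        _ = k*n := by rw [show k - 1 + 1 = k by omega]
      omega
    rw [if_neg (by
      rw [hval]
      have := Nat.le_mul_of_pos_left n (show 0 < i + 1 by omega)
      omega)]

lemma Dpow_full (hn : 0 < n) (hk : 2 ≤ k) (t : ℕ) (ht : t < n) (g : FreeGroup (Fin n)) :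
    ((Ap k n hn ^ k * Bp k n ^ n) ^ k) (g, ((t : ℕ) : ZMod (k * n)), (0 : ZMod k)) =
      (FreeGroup.of (⟨t, ht⟩ : Fin n) * g, ((t : ℕ) : ZMod (k * n)), 0) := by
  haveI : NeZero (k * n) := ⟨by positivity⟩
  rw [show (Ap k n hn ^ k * Bp k n ^ n) ^ k
      = (Ap k n hn ^ k * Bp k n ^ n) * (Ap k n hn ^ k * Bp k n ^ n) ^ (k-1) by
    rw [← pow_succ']; congr 1; omega]
  rw [Equiv.Perm.mul_apply, Dpow_quiet k n hn hk t (k-1) ht le_rfl,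
    Equiv.Perm.mul_apply, Bp_pow, Ap_run k n hn hk]
  have hc : ((t + (k-1) * n : ℕ) : ZMod (k*n)) + ((n : ℕ) : ZMod (k*n))
      = ((t : ℕ) : ZMod (k*n)) := by
    have h3 : (k-1)*n + n = k * n := by
      calc (k-1)*n + n = ((k-1)+1)*n := by ring
      _ = k*n := by rw [show k - 1 + 1 = k by omega]
    rw [← Nat.cast_add, show t + (k-1) * n + n = t + k * n by omega,
      Nat.cast_add, ZMod.natCast_self, add_zero]
  rw [hc]
  have hval : ((t : ℕ) : ZMod (k*n)).val = t :=
    ZMod.val_natCast_of_lt (by calc t < n := ht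
                                 _ ≤ k * n := Nat.le_mul_of_pos_left n (by omega))
  rw [if_pos (by rw [hval]; omega)]
  congr 2
  unfold Stmt19Aux.em
  congr 1
  exact Fin.ext (by simp only [hval]; exact Nat.mod_eq_of_lt ht)

end Stmt19Aux2

open Stmt19Aux in
/-- With `H = ker(F₂ → ℤ/(kn), a ↦ n, b ↦ 1)` (`k, n ≥ 2`) and
`w_t = b⁻ᵗ (aᵏbⁿ)ᵏ bᵗ` for `t = 0, …, n-1`, the subgroup `K = ⟨w₀, …, w_{n-1}⟩ ≤ H` is
free of rank `n`, freely generated by `w₀, …, w_{n-1}`. -/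
theorem stmt19 (k n : ℕ) (hk : 2 ≤ k) (hn : 2 ≤ n)
    (a b : FreeGroup (Fin 2)) (ha : a = FreeGroup.of 0) (hb : b = FreeGroup.of 1)
    (f : FreeGroup (Fin 2) →* Multiplicative (ZMod (k * n)))
    (hf : f = FreeGroup.lift (fun i : Fin 2 =>
      if i = 0 then Multiplicative.ofAdd ((n : ZMod (k * n)))
      else Multiplicative.ofAdd ((1 : ZMod (k * n)))))
    (H : Subgroup (FreeGroup (Fin 2))) (hH : H = f.ker)
    (wt : Fin n → FreeGroup (Fin 2))
    (hwt : ∀ t : Fin n, wt t = b ^ (-(t : ℤ)) * (a ^ k * b ^ n) ^ k * b ^ (t : ℤ)) :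
    (∀ t : Fin n, wt t ∈ H) ∧
    Function.Injective
      (FreeGroup.lift wt : FreeGroup (Fin n) →* FreeGroup (Fin 2)) := by
  have hn0 : 0 < n := by omega
  haveI : NeZero (k * n) := ⟨by positivity⟩
  have hfa : f a = Multiplicative.ofAdd ((n : ZMod (k * n))) := by
    rw [hf, ha, FreeGroup.lift_apply_of, if_pos rfl]
  have hfb : f b = Multiplicative.ofAdd ((1 : ZMod (k * n))) := by
    rw [hf, hb, FreeGroup.lift_apply_of, if_neg (by decide)]
  constructor
  · -- kernel membership
    intro t
    rw [hH, MonoidHom.mem_ker, hwt t]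
    rw [map_mul, map_mul, map_zpow, map_zpow, map_pow, map_mul, map_pow, map_pow, hfa, hfb]
    have h0 : ((k : ZMod (k*n)) * (n : ZMod (k*n))) = 0 := by
      rw [← Nat.cast_mul, ZMod.natCast_self]
    apply Multiplicative.toAdd.injective
    simp only [toAdd_mul, toAdd_zpow, toAdd_pow, toAdd_ofAdd, toAdd_one,
      zsmul_eq_mul, nsmul_eq_mul, smul_eq_mul]
    push_cast
    linear_combination ((k : ZMod (k*n)) + 1) * h0
  · -- injectivity
    set ρ : FreeGroup (Fin 2) →* Equiv.Perm (St k n) :=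
      FreeGroup.lift (fun i : Fin 2 => if i = 0 then Ap k n hn0 else Bp k n) with hρ
    have hρa : ρ a = Ap k n hn0 := by rw [hρ, ha, FreeGroup.lift_apply_of, if_pos rfl]
    have hρb : ρ b = Bp k n := by rw [hρ, hb, FreeGroup.lift_apply_of, if_neg (by decide)]
    have key : ∀ (t : Fin n) (g : FreeGroup (Fin n)),
        ρ (wt t) (g, (0 : ZMod (k*n)), (0 : ZMod k)) = (FreeGroup.of t * g, 0, 0) := by
      intro t g
      rw [hwt t, map_mul, map_mul, map_zpow, map_zpow, map_pow, map_mul, map_pow, map_pow,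
        hρa, hρb]
      rw [Equiv.Perm.mul_apply, Equiv.Perm.mul_apply]
      have htZ : ((t : ℤ)) = ((t : ℕ) : ℤ) := rfl
      rw [htZ, zpow_natCast, zpow_neg, zpow_natCast]
      rw [Bp_pow, zero_add]
      rw [Stmt19Aux2.Dpow_full k n hn0 hk (t : ℕ) t.isLt g]
      have hB : (Bp k n ^ (t : ℕ)) (FreeGroup.of t * g, (0 : ZMod (k*n)), (0 : ZMod k))
          = (FreeGroup.of t * g, ((t : ℕ) : ZMod (k*n)), 0) := by
        rw [Bp_pow, zero_add]
      rw [← hB, ← Equiv.Perm.mul_apply, inv_mul_cancel, Equiv.Perm.one_apply]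
    have main : ∀ h : FreeGroup (Fin n), ∀ g : FreeGroup (Fin n),
        ρ (FreeGroup.lift wt h) (g, (0 : ZMod (k*n)), (0 : ZMod k)) = (h * g, 0, 0) := by
      intro h
      induction h with
      | C1 => intro g; simp
      | of t => intro g; rw [FreeGroup.lift_apply_of]; exact key t g
      | inv_of t _ =>
        intro g
        have h3 : ρ (wt t) ((FreeGroup.of t)⁻¹ * g, (0 : ZMod (k*n)), (0 : ZMod k))
            = (g, 0, 0) := by rw [key t]; rw [mul_inv_cancel_left]
        rw [map_inv, map_inv, FreeGroup.lift_apply_of, ← h3, ← Equiv.Perm.mul_apply, inv_mul_cancel, Equiv.Perm.one_apply]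
      | mul x y ihx ihy =>
        intro g
        rw [map_mul, map_mul, Equiv.Perm.mul_apply, ihy, ihx, mul_assoc]
    rw [injective_iff_map_eq_one]
    intro g hg
    have h2 := main g 1
    rw [hg, map_one] at h2
    simp only [Equiv.Perm.one_apply, mul_one] at h2
    have := congrArg Prod.fst h2
    simpa using this.symm
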